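/- Let m, n be nonzero integers with |m| < |n|, let h = gcd(|m|,|n|), p = |m|/h, q = |n|/h, and let d ≥ 1 be an integer. Then in BS(m,n): the set of integers s such that t^{−d} a^s t^{d} belongs to the cyclic subgroup ⟨a⟩ is exactly the set of integer multiples of h·q^d, and the set of integers s such that t^{d} a^s t^{−d} belongs to ⟨a⟩ is exactly the set of integer multiples of h·p^d. -/

import Mathlib

/-- The single defining relator `t a^m t⁻¹ (a^n)⁻¹` of the Baumslag–Solitar group `BS(m,n)`,
as an element of the free group on `Bool`, where `false` stands for the generator `a` and
`true` for the generator `t`. -/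
def bsRel (m n : ℤ) : FreeGroup Bool :=
  FreeGroup.of true * FreeGroup.of false ^ m * (FreeGroup.of true)⁻¹ *
    (FreeGroup.of false ^ n)⁻¹

/-- The Baumslag–Solitar group `BS(m,n) = ⟨a, t ∣ t a^m t⁻¹ = a^n⟩`. -/
abbrev BS (m n : ℤ) : Type := PresentedGroup ({bsRel m n} : Set (FreeGroup Bool))

/-- The generator `a` of `BS(m,n)`. -/
def BS.a (m n : ℤ) : BS m n := PresentedGroup.of false

/-- The generator `t` (stable letter) of `BS(m,n)`. -/
def BS.t (m n : ℤ) : BS m n := PresentedGroup.of true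

/-- The `a`-line through `g` in `BS(m,n)`: the left coset `g⟨a⟩`. -/
def aLine (m n : ℤ) (g : BS m n) : Set (BS m n) := {x | ∃ i : ℤ, x = g * BS.a m n ^ i}

/-- The `t`-line through `g` in `BS(m,n)`: the left coset `g⟨t⟩`. -/
def tLine (m n : ℤ) (g : BS m n) : Set (BS m n) := {x | ∃ i : ℤ, x = g * BS.t m n ^ i}

/-- A standard line in `BS(m,n)` is an `a`-line or a `t`-line. -/
def IsStandardLine (m n : ℤ) (ℓ : Set (BS m n)) : Prop :=
  (∃ g, ℓ = aLine m n g) ∨ (∃ g, ℓ = tLine m n g)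

/-- A map `BS(m,n) → BS(m',n')` is line-preserving if the image of every standard line is a
standard line. -/
def LinePreserving {m n m' n' : ℤ} (φ : BS m n → BS m' n') : Prop :=
  ∀ ℓ : Set (BS m n), IsStandardLine m n ℓ → IsStandardLine m' n' (φ '' ℓ)

namespace BSAux

open Multiplicative HNNExtension HNNExtension.NormalWord

lemma ofAdd_zpow' (a k : ℤ) : (ofAdd a) ^ k = ofAdd (k * a) := by
  rw [← ofAdd_zsmul]; simp [zsmul_eq_mul]

/-- The subgroup of `Multiplicative ℤ` generated by `ofAdd k`. -/
def SG (k : ℤ) : Subgroup (Multiplicative ℤ) := Subgroup.zpowers (ofAdd k)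

lemma mem_SG_iff {k s : ℤ} : ofAdd s ∈ SG k ↔ k ∣ s := by
  constructor
  · intro hs
    obtain ⟨j, hj⟩ := Subgroup.mem_zpowers_iff.1 hs
    rw [ofAdd_zpow'] at hj
    exact ⟨j, by simpa [mul_comm] using (ofAdd.injective hj).symm⟩
  · rintro ⟨j, rfl⟩
    exact Subgroup.mem_zpowers_iff.2 ⟨j, by rw [ofAdd_zpow', mul_comm]⟩

/-- `Multiplicative ℤ ≃* SG k` sending `ofAdd j` to `ofAdd (j * k)`. -/
noncomputable def eSG (k : ℤ) (hk : k ≠ 0) : Multiplicative ℤ ≃* SG k :=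
  MulEquiv.ofBijective ((zpowersHom (SG k)) ⟨ofAdd k, Subgroup.mem_zpowers _⟩)
    ⟨by
      intro x y hxy
      have := congrArg (Subtype.val) hxy
      simp only [zpowersHom_apply] at this
      rw [SubgroupClass.coe_zpow, SubgroupClass.coe_zpow] at this
      rw [ofAdd_zpow', ofAdd_zpow'] at this
      have := ofAdd.injective this
      have := mul_right_cancel₀ hk this
      exact toAdd.injective this,
     by
      rintro ⟨x, hx⟩
      obtain ⟨j, hj⟩ := Subgroup.mem_zpowers_iff.1 hx
      exact ⟨ofAdd j, Subtype.ext (by simpa using hj)⟩⟩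

lemma eSG_apply (k : ℤ) (hk : k ≠ 0) (j : ℤ) :
    (eSG k hk (ofAdd j) : Multiplicative ℤ) = ofAdd (j * k) := by
  show ((⟨ofAdd k, Subgroup.mem_zpowers _⟩ : SG k) ^ (toAdd (ofAdd j)) : SG k).val = _
  rw [SubgroupClass.coe_zpow, toAdd_ofAdd, ofAdd_zpow']

/-- The isomorphism `SG m ≃* SG n` sending `ofAdd (j*m)` to `ofAdd (j*n)`. -/
noncomputable def phiAB (m n : ℤ) (hm : m ≠ 0) (hn : n ≠ 0) : SG m ≃* SG n :=
  (eSG m hm).symm.trans (eSG n hn)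

lemma phiAB_apply (m n : ℤ) (hm : m ≠ 0) (hn : n ≠ 0) (j : ℤ) (hj : ofAdd (j * m) ∈ SG m) :
    ((phiAB m n hm hn ⟨ofAdd (j * m), hj⟩ : SG n) : Multiplicative ℤ) = ofAdd (j * n) := by
  have h1 : eSG m hm (ofAdd j) = ⟨ofAdd (j * m), hj⟩ := Subtype.ext (eSG_apply m hm j)
  have h2 : (eSG m hm).symm ⟨ofAdd (j * m), hj⟩ = ofAdd j := by
    rw [← h1, MulEquiv.symm_apply_apply]
  show ((eSG n hn ((eSG m hm).symm ⟨ofAdd (j * m), hj⟩) : SG n) : Multiplicative ℤ) = _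
  rw [h2, eSG_apply]

lemma phiAB_symm_apply (m n : ℤ) (hm : m ≠ 0) (hn : n ≠ 0) (j : ℤ)
    (hj : ofAdd (j * n) ∈ SG n) :
    (((phiAB m n hm hn).symm ⟨ofAdd (j * n), hj⟩ : SG m) : Multiplicative ℤ) = ofAdd (j * m) := by
  have h1 : phiAB m n hm hn ⟨ofAdd (j * m), Subgroup.mem_zpowers_iff.2 ⟨j, by
      rw [ofAdd_zpow']⟩⟩ = ⟨ofAdd (j * n), hj⟩ :=
    Subtype.ext (phiAB_apply m n hm hn j _)
  rw [← h1, MulEquiv.symm_apply_apply]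

variable {m n : ℤ} {hm : m ≠ 0} {hn : n ≠ 0}

/-- Britton's lemma, specialized: if `t^{ud} g t^{-ud}` lies in the base group, then
`g` lies in `toSubgroup (SG m) (SG n) u`. -/
lemma key (u : ℤˣ) (d : ℕ) (hd : 1 ≤ d) (g : Multiplicative ℤ)
    (hmem : t ^ ((u : ℤ) * d) * of g * t ^ (-((u : ℤ) * d)) ∈
      (of.range : Subgroup (HNNExtension (Multiplicative ℤ) (SG m) (SG n) (phiAB m n hm hn)))) :
    g ∈ toSubgroup (SG m) (SG n) u := by
  by_contra hg
  set φ := phiAB m n hm hn with hφ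
  set R : ℤˣ × Multiplicative ℤ → ℤˣ × Multiplicative ℤ → Prop :=
    fun a b => a.2 ∈ toSubgroup (SG m) (SG n) a.1 → a.1 = b.1 with hR
  set l : List (ℤˣ × Multiplicative ℤ) :=
    List.replicate (d - 1) (u, 1) ++ (u, g) :: List.replicate d (-u, 1) with hl
  have hchain : l.IsChain R := by
    rw [hl, List.isChain_append]
    refine ⟨List.isChain_replicate_of_rel _ (fun _ => rfl), ?_, ?_⟩
    · rw [List.isChain_cons]
      refine ⟨?_, List.isChain_replicate_of_rel _ (fun _ => rfl)⟩
      intro y hy hgy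
      exact absurd hgy hg
    · intro x hx y hy
      have hx' := List.eq_of_mem_replicate (List.mem_of_mem_getLast? hx)
      rw [List.head?_cons, Option.mem_some_iff] at hy
      subst hx'; subst hy
      intro _; rfl
  set w : ReducedWord (Multiplicative ℤ) (SG m) (SG n) := ⟨1, l, hchain⟩ with hw
  have hprod : w.prod φ = t ^ ((u : ℤ) * d) * of g * t ^ (-((u : ℤ) * d)) := by
    show of (1 : Multiplicative ℤ) * (l.map fun x => t ^ (x.1 : ℤ) * of x.2).prod = _
    rw [hl, List.map_append, List.map_cons, List.map_replicate, List.map_replicate,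
      List.prod_append, List.prod_cons, List.prod_replicate, List.prod_replicate]
    simp only [map_one, one_mul, mul_one, Units.val_neg]
    rw [← zpow_natCast (t ^ (u : ℤ)) (d - 1), ← zpow_mul,
        ← zpow_natCast (t ^ (-(u : ℤ))) d, ← zpow_mul]
    have hcast : ((d - 1 : ℕ) : ℤ) = (d : ℤ) - 1 := by
      have : (1:ℕ) ≤ d := hd
      omega
    rw [hcast]
    have h1 : (t : HNNExtension (Multiplicative ℤ) (SG m) (SG n) φ) ^ ((u:ℤ) * ((d:ℤ) - 1)) *
        (t ^ (u:ℤ) * of g) = t ^ ((u:ℤ) * d) * of g := by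
      rw [← mul_assoc, ← zpow_add]
      ring_nf
    rw [← mul_assoc, h1, mul_assoc, mul_assoc]
    congr 2
    ring
  have hnil := ReducedWord.toList_eq_nil_of_mem_of_range φ w (by rw [hprod]; exact hmem)
  rw [hw] at hnil
  simp [hl] at hnil

section NT

variable (m n : ℤ) (hm : m ≠ 0) (hn : n ≠ 0)

lemma H_dvd_absm : (Int.gcd m n : ℤ) ∣ |m| := (dvd_abs _ _).2 (Int.gcd_dvd_left m n)
lemma H_dvd_absn : (Int.gcd m n : ℤ) ∣ |n| := (dvd_abs _ _).2 (Int.gcd_dvd_right m n)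

lemma H_ne_zero (hm : m ≠ 0) : (Int.gcd m n : ℤ) ≠ 0 := by
  simp [Int.gcd_eq_zero_iff, hm]

lemma HP_eq : (Int.gcd m n : ℤ) * (|m| / (Int.gcd m n : ℤ)) = |m| :=
  Int.mul_ediv_cancel' (H_dvd_absm m n)

lemma HQ_eq : (Int.gcd m n : ℤ) * (|n| / (Int.gcd m n : ℤ)) = |n| :=
  Int.mul_ediv_cancel' (H_dvd_absn m n)

lemma PQ_coprime (hm : m ≠ 0) : IsCoprime (|m| / (Int.gcd m n : ℤ)) (|n| / (Int.gcd m n : ℤ)) := by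
  rw [Int.isCoprime_iff_gcd_eq_one]
  have h1 : Int.gcd ((Int.gcd m n : ℤ) * (|m| / (Int.gcd m n : ℤ)))
      ((Int.gcd m n : ℤ) * (|n| / (Int.gcd m n : ℤ))) =
      (Int.gcd m n : ℤ).natAbs * Int.gcd (|m| / (Int.gcd m n : ℤ)) (|n| / (Int.gcd m n : ℤ)) :=
    Int.gcd_mul_left _ _ _
  rw [HP_eq m n, HQ_eq m n] at h1
  have h2 : Int.gcd |m| |n| = Int.gcd m n := by
    simp [Int.gcd, Int.natAbs_abs]
  rw [h2] at h1
  have h3 : (Int.gcd m n : ℤ).natAbs = Int.gcd m n := by simp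
  rw [h3] at h1
  have h0 : Int.gcd m n ≠ 0 := by
    simp [Int.gcd_eq_zero_iff, hm]
  nlinarith [Nat.one_le_iff_ne_zero.2 h0,
    Nat.eq_of_mul_eq_mul_left (Nat.pos_of_ne_zero h0)
      (h1.symm.trans (mul_one (Int.gcd m n)).symm)]

end NT

lemma C1 (m n : ℤ) (hm : m ≠ 0) (hn : n ≠ 0) :
    ∀ d : ℕ, 1 ≤ d → ∀ s : ℤ,
      t ^ (-(d : ℤ)) * of (ofAdd s) * t ^ (d : ℤ) ∈
        (of.range : Subgroup (HNNExtension (Multiplicative ℤ) (SG m) (SG n)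
          (phiAB m n hm hn))) →
      (Int.gcd m n : ℤ) * ((|n| / (Int.gcd m n : ℤ))) ^ d ∣ s := by
  have hkey : ∀ d : ℕ, 1 ≤ d → ∀ s : ℤ,
      t ^ (-(d : ℤ)) * of (ofAdd s) * t ^ (d : ℤ) ∈
        (of.range : Subgroup (HNNExtension (Multiplicative ℤ) (SG m) (SG n)
          (phiAB m n hm hn))) → n ∣ s := by
    intro d hd s hs
    have hmem : t ^ ((((-1 : ℤˣ)) : ℤ) * d) * of (ofAdd s) *
        t ^ (-((((-1 : ℤˣ)) : ℤ) * d)) ∈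
        (of.range : Subgroup (HNNExtension (Multiplicative ℤ) (SG m) (SG n)
          (phiAB m n hm hn))) := by
      simpa [neg_mul, one_mul] using hs
    have := key (hm := hm) (hn := hn) (-1) d hd (ofAdd s) hmem
    rw [toSubgroup_neg_one] at this
    exact mem_SG_iff.1 this
  intro d hd
  induction d, hd using Nat.le_induction with
  | base =>
    intro s hs
    have hns := hkey 1 le_rfl s hs
    rw [pow_one, HQ_eq]
    exact (abs_dvd _ _).2 hns
  | succ d hd ih =>
    intro s hs
    obtain ⟨u, rfl⟩ := hkey (d + 1) (by omega) s hs
    have hb : ofAdd (u * n) ∈ SG n := mem_SG_iff.2 (Dvd.intro_left u rfl)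
    have hin : (t⁻¹ * of (ofAdd (u * n)) * t :
          HNNExtension (Multiplicative ℤ) (SG m) (SG n) (phiAB m n hm hn)) =
        of (ofAdd (u * m)) := by
      have h0 := equiv_symm_eq_conj (φ := phiAB m n hm hn) ⟨ofAdd (u * n), hb⟩
      rw [phiAB_symm_apply] at h0
      exact h0.symm
    have hsplit : (t ^ (-((d + 1 : ℕ) : ℤ)) * of (ofAdd (u * n)) * t ^ (((d + 1 : ℕ)) : ℤ) :
          HNNExtension (Multiplicative ℤ) (SG m) (SG n) (phiAB m n hm hn)) =
        t ^ (-(d : ℤ)) * (t⁻¹ * of (ofAdd (u * n)) * t) * t ^ (d : ℤ) := by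
      push_cast
      group
    rw [mul_comm n u] at hs
    rw [hsplit, hin] at hs
    have hMu := ih (u * m) hs
    set H : ℤ := (Int.gcd m n : ℤ) with hH
    set P : ℤ := |m| / H with hPdef
    set Q : ℤ := |n| / H with hQdef
    have h1 : H * Q ^ d ∣ |m| * u := by
      rcases abs_choice m with h | h
      · rw [h, mul_comm m u]; exact hMu
      · rw [h, neg_mul, dvd_neg, mul_comm m u]; exact hMu
    have h2 : Q ^ d ∣ P * u := by
      have := h1
      rw [← HP_eq m n] at this
      rw [mul_assoc] at this
      exact (mul_dvd_mul_iff_left (H_ne_zero m n hm)).1 this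
    have h3 : Q ^ d ∣ u :=
      ((PQ_coprime m n hm).symm.pow_left).dvd_of_dvd_mul_left h2
    have h4 : H * Q ∣ n := by
      rw [HQ_eq m n]; exact (abs_dvd _ _).2 dvd_rfl
    calc H * Q ^ (d + 1) = (H * Q) * Q ^ d := by ring
    _ ∣ n * u := mul_dvd_mul h4 h3

lemma C2 (m n : ℤ) (hm : m ≠ 0) (hn : n ≠ 0) :
    ∀ d : ℕ, 1 ≤ d → ∀ s : ℤ,
      t ^ (d : ℤ) * of (ofAdd s) * t ^ (-(d : ℤ)) ∈
        (of.range : Subgroup (HNNExtension (Multiplicative ℤ) (SG m) (SG n)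
          (phiAB m n hm hn))) →
      (Int.gcd m n : ℤ) * ((|m| / (Int.gcd m n : ℤ))) ^ d ∣ s := by
  have hkey : ∀ d : ℕ, 1 ≤ d → ∀ s : ℤ,
      t ^ (d : ℤ) * of (ofAdd s) * t ^ (-(d : ℤ)) ∈
        (of.range : Subgroup (HNNExtension (Multiplicative ℤ) (SG m) (SG n)
          (phiAB m n hm hn))) → m ∣ s := by
    intro d hd s hs
    have hmem : t ^ ((((1 : ℤˣ)) : ℤ) * d) * of (ofAdd s) *
        t ^ (-((((1 : ℤˣ)) : ℤ) * d)) ∈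
        (of.range : Subgroup (HNNExtension (Multiplicative ℤ) (SG m) (SG n)
          (phiAB m n hm hn))) := by
      simpa [one_mul] using hs
    have := key (hm := hm) (hn := hn) 1 d hd (ofAdd s) hmem
    rw [toSubgroup_one] at this
    exact mem_SG_iff.1 this
  intro d hd
  induction d, hd using Nat.le_induction with
  | base =>
    intro s hs
    have hns := hkey 1 le_rfl s hs
    rw [pow_one, HP_eq]
    exact (abs_dvd _ _).2 hns
  | succ d hd ih =>
    intro s hs
    obtain ⟨u, rfl⟩ := hkey (d + 1) (by omega) s hs
    have hb : ofAdd (u * m) ∈ SG m := mem_SG_iff.2 (Dvd.intro_left u rfl)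
    have hin : (t * of (ofAdd (u * m)) * t⁻¹ :
          HNNExtension (Multiplicative ℤ) (SG m) (SG n) (phiAB m n hm hn)) =
        of (ofAdd (u * n)) := by
      have h0 := equiv_eq_conj (φ := phiAB m n hm hn) ⟨ofAdd (u * m), hb⟩
      rw [phiAB_apply] at h0
      exact h0.symm
    have hsplit : (t ^ (((d + 1 : ℕ)) : ℤ) * of (ofAdd (u * m)) * t ^ (-((d + 1 : ℕ) : ℤ)) :
          HNNExtension (Multiplicative ℤ) (SG m) (SG n) (phiAB m n hm hn)) =
        t ^ ((d : ℤ)) * (t * of (ofAdd (u * m)) * t⁻¹) * t ^ (-(d : ℤ)) := by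
      push_cast
      group
    rw [mul_comm m u] at hs
    rw [hsplit, hin] at hs
    have hMu := ih (u * n) hs
    set H : ℤ := (Int.gcd m n : ℤ) with hH
    set P : ℤ := |m| / H with hPdef
    set Q : ℤ := |n| / H with hQdef
    have h1 : H * P ^ d ∣ |n| * u := by
      rcases abs_choice n with h | h
      · rw [h, mul_comm n u]; exact hMu
      · rw [h, neg_mul, dvd_neg, mul_comm n u]; exact hMu
    have h2 : P ^ d ∣ Q * u := by
      have := h1
      rw [← HQ_eq m n] at this
      rw [mul_assoc] at this
      exact (mul_dvd_mul_iff_left (H_ne_zero m n hm)).1 this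
    have h3 : P ^ d ∣ u :=
      ((PQ_coprime m n hm).pow_left).dvd_of_dvd_mul_left h2
    have h4 : H * P ∣ m := by
      rw [HP_eq m n]; exact (abs_dvd _ _).2 dvd_rfl
    calc H * P ^ (d + 1) = (H * P) * P ^ d := by ring
    _ ∣ m * u := mul_dvd_mul h4 h3

lemma bs_relation (m n : ℤ) :
    BS.t m n * BS.a m n ^ m * (BS.t m n)⁻¹ = BS.a m n ^ n := by
  have h1 : PresentedGroup.mk {bsRel m n} (bsRel m n) = 1 :=
    (QuotientGroup.eq_one_iff _).2 (Subgroup.subset_normalClosure (Set.mem_singleton _))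
  rw [bsRel] at h1
  simp only [map_mul, map_zpow, map_inv] at h1
  exact mul_inv_eq_one.1 h1

lemma bs_conj2 (m n : ℤ) (u : ℤ) :
    BS.t m n * BS.a m n ^ (m * u) * (BS.t m n)⁻¹ = BS.a m n ^ (n * u) := by
  rw [zpow_mul, zpow_mul, ← bs_relation m n]
  exact conj_zpow.symm

lemma bs_conj1 (m n : ℤ) (u : ℤ) :
    (BS.t m n)⁻¹ * BS.a m n ^ (n * u) * BS.t m n = BS.a m n ^ (m * u) := by
  rw [← bs_conj2 m n u]
  group

lemma R1 (m n : ℤ) (h p q : ℤ) (hpm : h * p = |m|) (hqn : h * q = |n|) :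
    ∀ d : ℕ, ∀ c : ℤ, ∃ e : ℤ,
      BS.t m n ^ (-(d : ℤ)) * BS.a m n ^ (h * q ^ d * c) * BS.t m n ^ (d : ℤ) =
        BS.a m n ^ e := by
  intro d
  induction d with
  | zero => intro c; exact ⟨h * q ^ 0 * c, by simp⟩
  | succ d ih =>
    intro c
    have hkey : ∃ u c₀ : ℤ, n * u = h * q ^ (d + 1) * c ∧ m * u = h * q ^ d * c₀ := by
      rcases abs_choice n with h1 | h1 <;> rcases abs_choice m with h2 | h2
      · have en : h * q = n := by rw [hqn, h1]
        have em : h * p = m := by rw [hpm, h2]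
        exact ⟨q ^ d * c, p * c, by linear_combination (-(q ^ d * c)) * en,
          by linear_combination (-(q ^ d * c)) * em⟩
      · have en : h * q = n := by rw [hqn, h1]
        have em : h * p = -m := by rw [hpm, h2]
        exact ⟨q ^ d * c, -(p * c), by linear_combination (-(q ^ d * c)) * en,
          by linear_combination q ^ d * c * em⟩
      · have en : h * q = -n := by rw [hqn, h1]
        have em : h * p = m := by rw [hpm, h2]
        exact ⟨-(q ^ d * c), -(p * c), by linear_combination (-(q ^ d * c)) * en,
          by linear_combination q ^ d * c * em⟩
      · have en : h * q = -n := by rw [hqn, h1]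
        have em : h * p = -m := by rw [hpm, h2]
        exact ⟨-(q ^ d * c), p * c, by linear_combination (-(q ^ d * c)) * en,
          by linear_combination (-(q ^ d * c)) * em⟩
    obtain ⟨u, c₀, hu1, hu2⟩ := hkey
    obtain ⟨e, he⟩ := ih c₀
    refine ⟨e, ?_⟩
    have hstep : (BS.t m n)⁻¹ * BS.a m n ^ (h * q ^ (d + 1) * c) * BS.t m n =
        BS.a m n ^ (h * q ^ d * c₀) := by
      rw [← hu1, bs_conj1, hu2]
    have hsplit : BS.t m n ^ (-((d + 1 : ℕ) : ℤ)) * BS.a m n ^ (h * q ^ (d + 1) * c) *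
        BS.t m n ^ (((d + 1 : ℕ)) : ℤ) =
        BS.t m n ^ (-(d : ℤ)) *
          ((BS.t m n)⁻¹ * BS.a m n ^ (h * q ^ (d + 1) * c) * BS.t m n) *
          BS.t m n ^ (d : ℤ) := by
      push_cast
      group
    rw [hsplit, hstep, he]

lemma R2 (m n : ℤ) (h p q : ℤ) (hpm : h * p = |m|) (hqn : h * q = |n|) :
    ∀ d : ℕ, ∀ c : ℤ, ∃ e : ℤ,
      BS.t m n ^ ((d : ℤ)) * BS.a m n ^ (h * p ^ d * c) * BS.t m n ^ (-(d : ℤ)) =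
        BS.a m n ^ e := by
  intro d
  induction d with
  | zero => intro c; exact ⟨h * p ^ 0 * c, by simp⟩
  | succ d ih =>
    intro c
    have hkey : ∃ u c₀ : ℤ, m * u = h * p ^ (d + 1) * c ∧ n * u = h * p ^ d * c₀ := by
      rcases abs_choice m with h1 | h1 <;> rcases abs_choice n with h2 | h2
      · have em : h * p = m := by rw [hpm, h1]
        have en : h * q = n := by rw [hqn, h2]
        exact ⟨p ^ d * c, q * c, by linear_combination (-(p ^ d * c)) * em,
          by linear_combination (-(p ^ d * c)) * en⟩
      · have em : h * p = m := by rw [hpm, h1]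
        have en : h * q = -n := by rw [hqn, h2]
        exact ⟨p ^ d * c, -(q * c), by linear_combination (-(p ^ d * c)) * em,
          by linear_combination p ^ d * c * en⟩
      · have em : h * p = -m := by rw [hpm, h1]
        have en : h * q = n := by rw [hqn, h2]
        exact ⟨-(p ^ d * c), -(q * c), by linear_combination (-(p ^ d * c)) * em,
          by linear_combination p ^ d * c * en⟩
      · have em : h * p = -m := by rw [hpm, h1]
        have en : h * q = -n := by rw [hqn, h2]
        exact ⟨-(p ^ d * c), q * c, by linear_combination (-(p ^ d * c)) * em,
          by linear_combination (-(p ^ d * c)) * en⟩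
    obtain ⟨u, c₀, hu1, hu2⟩ := hkey
    obtain ⟨e, he⟩ := ih c₀
    refine ⟨e, ?_⟩
    have hstep : BS.t m n * BS.a m n ^ (h * p ^ (d + 1) * c) * (BS.t m n)⁻¹ =
        BS.a m n ^ (h * p ^ d * c₀) := by
      rw [← hu1, bs_conj2, hu2]
    have hsplit : BS.t m n ^ (((d + 1 : ℕ)) : ℤ) * BS.a m n ^ (h * p ^ (d + 1) * c) *
        BS.t m n ^ (-((d + 1 : ℕ) : ℤ)) =
        BS.t m n ^ ((d : ℤ)) *
          (BS.t m n * BS.a m n ^ (h * p ^ (d + 1) * c) * (BS.t m n)⁻¹) *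
          BS.t m n ^ (-(d : ℤ)) := by
      push_cast
      group
    rw [hsplit, hstep, he]

noncomputable def psi (m n : ℤ) (hm : m ≠ 0) (hn : n ≠ 0) :
    BS m n →* HNNExtension (Multiplicative ℤ) (SG m) (SG n) (phiAB m n hm hn) :=
  PresentedGroup.toGroup
    (f := fun b => cond b t (of (ofAdd (1 : ℤ))))
    (by
      intro r hr
      rw [Set.mem_singleton_iff] at hr
      subst hr
      rw [bsRel]
      simp only [map_mul, map_zpow, map_inv, FreeGroup.lift_apply_of, Bool.cond_true,
        Bool.cond_false]
      have e1 : (of (ofAdd (1 : ℤ)) : HNNExtension (Multiplicative ℤ) (SG m) (SG n)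
          (phiAB m n hm hn)) ^ m = of (ofAdd m) := by
        rw [← map_zpow, ofAdd_zpow', mul_one]
      have e2 : (of (ofAdd (1 : ℤ)) : HNNExtension (Multiplicative ℤ) (SG m) (SG n)
          (phiAB m n hm hn)) ^ n = of (ofAdd n) := by
        rw [← map_zpow, ofAdd_zpow', mul_one]
      rw [e1, e2]
      have hb : ofAdd ((1 : ℤ) * m) ∈ SG m := mem_SG_iff.2 ⟨1, by ring⟩
      have h0 := equiv_eq_conj (φ := phiAB m n hm hn) ⟨ofAdd ((1 : ℤ) * m), hb⟩
      rw [phiAB_apply] at h0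
      have h0' : (of (ofAdd n) : HNNExtension (Multiplicative ℤ) (SG m) (SG n)
          (phiAB m n hm hn)) = t * of (ofAdd m) * t⁻¹ := by simpa using h0
      rw [← h0', mul_inv_cancel])

lemma psi_a (m n : ℤ) (hm : m ≠ 0) (hn : n ≠ 0) :
    psi m n hm hn (BS.a m n) = of (ofAdd (1 : ℤ)) :=
  PresentedGroup.toGroup.of _

lemma psi_t (m n : ℤ) (hm : m ≠ 0) (hn : n ≠ 0) :
    psi m n hm hn (BS.t m n) = t :=
  PresentedGroup.toGroup.of _

lemma of_one_zpow (m n : ℤ) (hm : m ≠ 0) (hn : n ≠ 0) (j : ℤ) :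
    (of (ofAdd (1 : ℤ)) : HNNExtension (Multiplicative ℤ) (SG m) (SG n)
      (phiAB m n hm hn)) ^ j = of (ofAdd j) := by
  rw [← map_zpow, ofAdd_zpow', mul_one]

lemma psi_a_zpow (m n : ℤ) (hm : m ≠ 0) (hn : n ≠ 0) (s : ℤ) :
    psi m n hm hn (BS.a m n ^ s) = of (ofAdd s) := by
  rw [map_zpow, psi_a, ← map_zpow, ofAdd_zpow', mul_one]

end BSAux


/-- Let `0 ≠ |m| < |n|`, `h = gcd(|m|,|n|)`, `p = |m|/h`, `q = |n|/h`, and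
`d ≥ 1`. Then in `BS(m,n)`, `t^{-d} a^s t^{d} ∈ ⟨a⟩` if and only if `h·q^d ∣ s`, and
`t^{d} a^s t^{-d} ∈ ⟨a⟩` if and only if `h·p^d ∣ s`. -/
theorem conjugate_power_in_aSubgroup_iff (m n : ℤ) (hm : m ≠ 0) (hn : n ≠ 0) (hmn : |m| < |n|)
    (h p q : ℤ) (hh : h = Int.gcd m n) (hp : p = |m| / h) (hq : q = |n| / h)
    (d : ℕ) (hd : 1 ≤ d) :
    (∀ s : ℤ, BS.t m n ^ (-(d : ℤ)) * BS.a m n ^ s * BS.t m n ^ (d : ℤ) ∈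
        Subgroup.zpowers (BS.a m n) ↔ (h * q ^ d) ∣ s) ∧
    (∀ s : ℤ, BS.t m n ^ (d : ℤ) * BS.a m n ^ s * BS.t m n ^ (-(d : ℤ)) ∈
        Subgroup.zpowers (BS.a m n) ↔ (h * p ^ d) ∣ s) := by
  subst hh; subst hp; subst hq
  constructor
  · intro s
    constructor
    · intro hs
      obtain ⟨j, hj⟩ := Subgroup.mem_zpowers_iff.1 hs
      have hj' := congrArg (BSAux.psi m n hm hn) hj
      simp only [map_mul, map_zpow, BSAux.psi_t, BSAux.psi_a,
        BSAux.of_one_zpow] at hj'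
      exact BSAux.C1 m n hm hn d hd s ⟨Multiplicative.ofAdd j, hj'⟩
    · rintro ⟨c, rfl⟩
      obtain ⟨e, he⟩ := BSAux.R1 m n _ _ _ (BSAux.HP_eq m n) (BSAux.HQ_eq m n) d c
      exact Subgroup.mem_zpowers_iff.2 ⟨e, he.symm⟩
  · intro s
    constructor
    · intro hs
      obtain ⟨j, hj⟩ := Subgroup.mem_zpowers_iff.1 hs
      have hj' := congrArg (BSAux.psi m n hm hn) hj
      simp only [map_mul, map_zpow, BSAux.psi_t, BSAux.psi_a,
        BSAux.of_one_zpow] at hj'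
      exact BSAux.C2 m n hm hn d hd s ⟨Multiplicative.ofAdd j, hj'⟩
    · rintro ⟨c, rfl⟩
      obtain ⟨e, he⟩ := BSAux.R2 m n _ _ _ (BSAux.HP_eq m n) (BSAux.HQ_eq m n) d c
      exact Subgroup.mem_zpowers_iff.2 ⟨e, he.symm⟩
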